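/- For 1 ≤ k ≤ n, Σ_{s ∈ S_{n,k}} Π_{i=1}^n (1/i)^{s_i} / s_i! = |s(n,k)|/n!, where |s(n,k)| is the unsigned Stirling number of the first kind. -/

import Mathlib

open Finset

/-- Unsigned Stirling numbers of the first kind (number of permutations of `n`
elements with `k` cycles), via the standard recurrence. -/
def stirlingFirst : ℕ → ℕ → ℕ
  | 0, 0 => 1
  | 0, _ + 1 => 0
  | _ + 1, 0 => 0
  | n + 1, k + 1 => n * stirlingFirst n (k + 1) + stirlingFirst n k


namespace ZS

/-- single-factor weight -/
noncomputable def F {N : ℕ} (i : Fin N) (m : ℕ) : ℝ :=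
  ((1 : ℝ) / (i.1 + 1 : ℝ)) ^ m / (Nat.factorial m : ℝ)

noncomputable def W (N : ℕ) (s : Fin N → ℕ) : ℝ := ∏ i, F i (s i)

def Sf (N n k : ℕ) : Finset (Fin N → ℕ) :=
  (Finset.Iic (fun _ => n : Fin N → ℕ)).filter
    (fun s => (∑ i, (i.1 + 1) * s i) = n ∧ (∑ i, s i) = k)

noncomputable def T (N n k : ℕ) : ℝ := ∑ s ∈ Sf N n k, W N s

lemma mem_Sf {N n k : ℕ} {s : Fin N → ℕ} :
    s ∈ Sf N n k ↔ (∑ i, (i.1 + 1) * s i) = n ∧ (∑ i, s i) = k := by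
  constructor
  · intro h; exact (Finset.mem_filter.mp h).2
  · intro h
    refine Finset.mem_filter.mpr ⟨Finset.mem_Iic.mpr ?_, h⟩
    intro i
    calc s i ≤ (i.1 + 1) * s i := Nat.le_mul_of_pos_left _ (Nat.succ_pos _)
    _ ≤ ∑ j, (j.1 + 1) * s j := Finset.single_le_sum (f := fun j => (j.1 + 1) * s j) (fun j _ => Nat.zero_le _) (Finset.mem_univ i)
    _ = n := h.1

lemma F_pos {N : ℕ} (i : Fin N) (m : ℕ) : 0 < F i m := by
  apply div_pos
  · apply pow_pos; positivity
  · exact_mod_cast Nat.factorial_pos m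

lemma mul_F {N : ℕ} (i : Fin N) (m : ℕ) (hm : 1 ≤ m) :
    (m : ℝ) * F i m = (1 / (i.1 + 1 : ℝ)) * F i (m - 1) := by
  obtain ⟨p, rfl⟩ : ∃ p, m = p + 1 := ⟨m - 1, (Nat.succ_pred_eq_of_pos hm).symm⟩
  simp only [F, Nat.add_sub_cancel, pow_succ, Nat.factorial_succ]
  push_cast
  have h1 : (Nat.factorial p : ℝ) ≠ 0 := by exact_mod_cast (Nat.factorial_pos p).ne'
  field_simp

end ZS

namespace ZS

lemma last_eq_zero {N n k : ℕ} (hn : n ≤ N) {s : Fin (N + 1) → ℕ}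
    (hs : s ∈ Sf (N + 1) n k) : s (Fin.last N) = 0 := by
  obtain ⟨h1, _⟩ := mem_Sf.mp hs
  by_contra h
  have h1le : (Fin.last N).1 + 1 ≤ ((Fin.last N).1 + 1) * s (Fin.last N) :=
    Nat.le_mul_of_pos_right _ (Nat.pos_of_ne_zero h)
  have : ((Fin.last N).1 + 1) * s (Fin.last N) ≤ n := by
    rw [← h1]
    exact Finset.single_le_sum (f := fun j : Fin (N+1) => (j.1 + 1) * s j)
      (fun j _ => Nat.zero_le _) (Finset.mem_univ _)
  simp only [Fin.val_last] at h1le this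
  omega

lemma T_stab {N n k : ℕ} (hn : n ≤ N) : T (N + 1) n k = T N n k := by
  unfold T
  refine Finset.sum_nbij' (fun s => s ∘ Fin.castSucc) (fun t => Fin.snoc t 0)
    ?_ ?_ ?_ ?_ ?_
  · intro s hs
    obtain ⟨h1, h2⟩ := mem_Sf.mp hs
    have hlast := last_eq_zero hn hs
    refine mem_Sf.mpr ⟨?_, ?_⟩
    · rw [← h1, Fin.sum_univ_castSucc]
      simp [hlast]
    · rw [← h2, Fin.sum_univ_castSucc]
      simp [hlast]
  · intro t ht
    obtain ⟨h1, h2⟩ := mem_Sf.mp ht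
    refine mem_Sf.mpr ⟨?_, ?_⟩
    · rw [Fin.sum_univ_castSucc]
      simpa using h1
    · rw [Fin.sum_univ_castSucc]
      simpa using h2
  · intro s hs
    have hlast := last_eq_zero hn hs
    funext i
    induction i using Fin.lastCases with
    | last => simpa using hlast.symm
    | cast i => simp
  · intro t ht
    funext i
    simp
  · intro s hs
    have hlast := last_eq_zero hn hs
    unfold W
    rw [Fin.prod_univ_castSucc]
    have : F (Fin.last N) (s (Fin.last N)) = 1 := by
      rw [hlast]; simp [F]
    rw [this, mul_one]
    apply Finset.prod_congr rfl
    intro i _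
    have : F (Fin.castSucc i) (s (Fin.castSucc i)) = F i ((s ∘ Fin.castSucc) i) := by
      simp [F]
    exact this

end ZS

namespace ZS

lemma sum_single (N : ℕ) (s : Fin N → ℕ) (g : Fin N → ℕ → ℕ) (a : Fin N) :
    ∑ i, g i (s i) = g a (s a) + ∑ i ∈ Finset.univ.erase a, g i (s i) :=
  (Finset.add_sum_erase _ _ (Finset.mem_univ a)).symm

lemma sum_update (N : ℕ) (s : Fin N → ℕ) (g : Fin N → ℕ → ℕ) (a : Fin N) (v : ℕ) :
    ∑ i, g i (Function.update s a v i)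
      = g a v + ∑ i ∈ Finset.univ.erase a, g i (s i) := by
  rw [sum_single N _ g a]
  simp only [Function.update_self]
  congr 1
  refine Finset.sum_congr rfl (fun i hi => ?_)
  rw [Function.update_of_ne (Finset.ne_of_mem_erase hi)]

lemma W_single {N : ℕ} (s : Fin N → ℕ) (a : Fin N) :
    W N s = F a (s a) * ∏ i ∈ Finset.univ.erase a, F i (s i) :=
  (Finset.mul_prod_erase _ _ (Finset.mem_univ a)).symm

lemma W_update {N : ℕ} (s : Fin N → ℕ) (a : Fin N) (v : ℕ) :
    W N (Function.update s a v) = F a v * ∏ i ∈ Finset.univ.erase a, F i (s i) := by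
  rw [W_single (Function.update s a v) a]
  simp only [Function.update_self]
  congr 1
  refine Finset.prod_congr rfl (fun i hi => ?_)
  rw [Function.update_of_ne (Finset.ne_of_mem_erase hi)]

lemma step0 (n k : ℕ) :
    ∑ s ∈ Sf (n+1) (n+1) (k+1), (s 0 : ℝ) * W (n+1) s = T (n+1) n k := by
  rw [← Finset.sum_filter_of_ne (p := fun s : Fin (n+1) → ℕ => s 0 ≠ 0)
    (f := fun s => (s 0 : ℝ) * W (n+1) s)
    (by intro s _ h hs0; simp [hs0] at h)]
  unfold T
  refine Finset.sum_nbij' (fun s => Function.update s 0 (s 0 - 1))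
    (fun t => Function.update t 0 (t 0 + 1)) ?_ ?_ ?_ ?_ ?_
  · intro s hs
    rw [Finset.mem_filter] at hs
    obtain ⟨hmem, hs0⟩ := hs
    obtain ⟨h1, h2⟩ := mem_Sf.mp hmem
    rw [sum_single (n+1) s (fun i m => (i.1+1) * m) 0] at h1
    rw [sum_single (n+1) s (fun _ m => m) 0] at h2
    refine mem_Sf.mpr ⟨?_, ?_⟩
    · rw [sum_update (n+1) s (fun i m => (i.1+1) * m) 0]
      simp only [Fin.val_zero] at h1 ⊢
      omega
    · rw [sum_update (n+1) s (fun _ m => m) 0]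
      omega
  · intro t ht
    obtain ⟨h1, h2⟩ := mem_Sf.mp ht
    rw [sum_single (n+1) t (fun i m => (i.1+1) * m) 0] at h1
    rw [sum_single (n+1) t (fun _ m => m) 0] at h2
    rw [Finset.mem_filter]
    constructor
    · refine mem_Sf.mpr ⟨?_, ?_⟩
      · rw [sum_update (n+1) t (fun i m => (i.1+1) * m) 0]
        simp only [Fin.val_zero] at h1 ⊢
        omega
      · rw [sum_update (n+1) t (fun _ m => m) 0]
        omega
    · simp
  · intro s hs
    rw [Finset.mem_filter] at hs
    have hs0 : 1 ≤ s 0 := Nat.one_le_iff_ne_zero.mpr hs.2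
    simp only [Function.update_self, Function.update_idem]
    rw [Nat.sub_add_cancel hs0, Function.update_eq_self]
  · intro t ht
    simp only [Function.update_self, Function.update_idem]
    rw [Nat.add_sub_cancel, Function.update_eq_self]
  · intro s hs
    rw [Finset.mem_filter] at hs
    have hs0 : 1 ≤ s 0 := Nat.one_le_iff_ne_zero.mpr hs.2
    rw [W_update, W_single s 0]
    have h := mul_F (0 : Fin (n+1)) (s 0) hs0
    simp only [Fin.val_zero] at h
    push_cast at h
    rw [← mul_assoc, h]
    norm_num

end ZS

namespace ZS

lemma mul_F' {N : ℕ} (i : Fin N) (m : ℕ) (hm : 1 ≤ m) :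
    ((i.1 + 1 : ℕ) : ℝ) * ((m : ℝ) * F i m) = F i (m - 1) := by
  have h := mul_F i m hm
  have hA : ((i.1 + 1 : ℕ) : ℝ) ≠ 0 := by positivity
  rw [h, ← mul_assoc]
  push_cast
  field_simp

lemma sum_double {N : ℕ} (s : Fin N → ℕ) (g : Fin N → ℕ → ℕ) {a b : Fin N} (hab : a ≠ b) :
    ∑ i, g i (s i)
      = g a (s a) + (g b (s b) + ∑ i ∈ (Finset.univ.erase a).erase b, g i (s i)) := by
  rw [sum_single N s g a]
  congr 1
  exact (Finset.add_sum_erase _ _ (Finset.mem_erase.mpr ⟨hab.symm, Finset.mem_univ b⟩)).symm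

lemma sum_double_update {N : ℕ} (s : Fin N → ℕ) (g : Fin N → ℕ → ℕ) {a b : Fin N}
    (hab : a ≠ b) (va vb : ℕ) :
    ∑ i, g i (Function.update (Function.update s a va) b vb i)
      = g a va + (g b vb + ∑ i ∈ (Finset.univ.erase a).erase b, g i (s i)) := by
  rw [sum_double (Function.update (Function.update s a va) b vb) g hab]
  have ha : Function.update (Function.update s a va) b vb a = va := by
    rw [Function.update_of_ne hab, Function.update_self]
  have hb : Function.update (Function.update s a va) b vb b = vb := Function.update_self _ _ _
  rw [ha, hb]
  congr 1
  congr 1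
  refine Finset.sum_congr rfl (fun i hi => ?_)
  rw [Finset.mem_erase, Finset.mem_erase] at hi
  rw [Function.update_of_ne hi.1, Function.update_of_ne hi.2.1]

lemma W_double {N : ℕ} (s : Fin N → ℕ) {a b : Fin N} (hab : a ≠ b) :
    W N s = F a (s a) * (F b (s b) * ∏ i ∈ (Finset.univ.erase a).erase b, F i (s i)) := by
  rw [W_single s a]
  congr 1
  exact (Finset.mul_prod_erase _ _ (Finset.mem_erase.mpr ⟨hab.symm, Finset.mem_univ b⟩)).symm

lemma W_double_update {N : ℕ} (s : Fin N → ℕ) {a b : Fin N} (hab : a ≠ b) (va vb : ℕ) :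
    W N (Function.update (Function.update s a va) b vb)
      = F a va * (F b vb * ∏ i ∈ (Finset.univ.erase a).erase b, F i (s i)) := by
  rw [W_double (Function.update (Function.update s a va) b vb) hab]
  have ha : Function.update (Function.update s a va) b vb a = va := by
    rw [Function.update_of_ne hab, Function.update_self]
  have hb : Function.update (Function.update s a va) b vb b = vb := Function.update_self _ _ _
  rw [ha, hb]
  congr 2
  refine Finset.prod_congr rfl (fun i hi => ?_)
  rw [Finset.mem_erase, Finset.mem_erase] at hi
  rw [Function.update_of_ne hi.1, Function.update_of_ne hi.2.1]

end ZS

namespace ZS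

lemma stepj (n k : ℕ) (i : Fin n) :
    ∑ s ∈ Sf (n+1) (n+1) (k+1), (((i.succ.1 + 1) * s i.succ : ℕ) : ℝ) * W (n+1) s
  = ∑ t ∈ Sf (n+1) n (k+1), (((i.castSucc.1 + 1) * t i.castSucc : ℕ) : ℝ) * W (n+1) t := by
  have hab : i.succ ≠ i.castSucc := (Fin.castSucc_lt_succ : i.castSucc < i.succ).ne'
  set a := i.succ with ha_def
  set b := i.castSucc with hb_def
  have hav : a.1 = i.1 + 1 := rfl
  have hbv : b.1 = i.1 := rfl
  rw [← Finset.sum_filter_of_ne (p := fun s : Fin (n+1) → ℕ => s a ≠ 0)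
    (f := fun s => (((a.1 + 1) * s a : ℕ) : ℝ) * W (n+1) s)
    (by intro s _ h hs0; simp [hs0] at h)]
  rw [← Finset.sum_filter_of_ne (p := fun t : Fin (n+1) → ℕ => t b ≠ 0)
    (f := fun t => (((b.1 + 1) * t b : ℕ) : ℝ) * W (n+1) t)
    (by intro t _ h ht0; simp [ht0] at h)]
  refine Finset.sum_nbij'
    (fun s => Function.update (Function.update s a (s a - 1)) b (s b + 1))
    (fun t => Function.update (Function.update t b (t b - 1)) a (t a + 1))
    ?_ ?_ ?_ ?_ ?_
  · intro s hs
    rw [Finset.mem_filter] at hs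
    obtain ⟨hmem, hs0⟩ := hs
    obtain ⟨h1, h2⟩ := mem_Sf.mp hmem
    obtain ⟨m, hm⟩ : ∃ m, s a = m + 1 := ⟨s a - 1, (Nat.succ_pred_eq_of_pos (Nat.pos_of_ne_zero hs0)).symm⟩
    rw [sum_double s (fun j v => (j.1+1) * v) hab] at h1
    rw [sum_double s (fun _ v => v) hab] at h2
    rw [Finset.mem_filter]
    refine ⟨mem_Sf.mpr ⟨?_, ?_⟩, ?_⟩
    · rw [sum_double_update s (fun j v => (j.1+1) * v) hab]
      rw [hav, hbv] at h1 ⊢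
      rw [hm] at h1 ⊢
      simp only [Nat.add_sub_cancel, Nat.mul_succ] at *
      linarith
    · rw [sum_double_update s (fun _ v => v) hab]
      omega
    · simp
  · intro t ht
    rw [Finset.mem_filter] at ht
    obtain ⟨hmem, ht0⟩ := ht
    obtain ⟨h1, h2⟩ := mem_Sf.mp hmem
    obtain ⟨m, hm⟩ : ∃ m, t b = m + 1 := ⟨t b - 1, (Nat.succ_pred_eq_of_pos (Nat.pos_of_ne_zero ht0)).symm⟩
    rw [sum_double t (fun j v => (j.1+1) * v) hab.symm] at h1
    rw [sum_double t (fun _ v => v) hab.symm] at h2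
    rw [Finset.mem_filter]
    refine ⟨mem_Sf.mpr ⟨?_, ?_⟩, ?_⟩
    · rw [sum_double_update t (fun j v => (j.1+1) * v) hab.symm]
      rw [hav, hbv] at h1 ⊢
      rw [hm] at h1 ⊢
      simp only [Nat.add_sub_cancel, Nat.mul_succ] at *
      linarith
    · rw [sum_double_update t (fun _ v => v) hab.symm]
      omega
    · simp
  · intro s hs
    rw [Finset.mem_filter] at hs
    have hs0 : 1 ≤ s a := Nat.one_le_iff_ne_zero.mpr hs.2
    funext j
    rcases eq_or_ne j a with rfl | hja
    · simp only [Function.update_self, Function.update_of_ne hab]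
      omega
    · rcases eq_or_ne j b with rfl | hjb
      · simp only [Function.update_self, Function.update_of_ne hab.symm]
        omega
      · simp only [Function.update_of_ne hja, Function.update_of_ne hjb]
  · intro t ht
    rw [Finset.mem_filter] at ht
    have ht0 : 1 ≤ t b := Nat.one_le_iff_ne_zero.mpr ht.2
    funext j
    rcases eq_or_ne j b with rfl | hjb
    · simp only [Function.update_self, Function.update_of_ne hab.symm]
      omega
    · rcases eq_or_ne j a with rfl | hja
      · simp only [Function.update_self, Function.update_of_ne hab]
        omega
      · simp only [Function.update_of_ne hja, Function.update_of_ne hjb]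
  · intro s hs
    rw [Finset.mem_filter] at hs
    have hs0 : 1 ≤ s a := Nat.one_le_iff_ne_zero.mpr hs.2
    simp only [Function.update_self]
    rw [W_double s hab, W_double_update s hab (s a - 1) (s b + 1)]
    have h1 := mul_F' a (s a) hs0
    have h2 := mul_F' b (s b + 1) (Nat.le_add_left 1 (s b))
    simp only [Nat.add_sub_cancel] at h2
    push_cast at h1 h2 ⊢
    linear_combination (F b (s b) * ∏ x ∈ (Finset.univ.erase a).erase b, F x (s x)) * h1
      - (F a (s a - 1) * ∏ x ∈ (Finset.univ.erase a).erase b, F x (s x)) * h2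

end ZS

namespace ZS

lemma recur (n k : ℕ) :
    ((n:ℝ)+1) * T (n+1) (n+1) (k+1) = (n:ℝ) * T (n+1) n (k+1) + T (n+1) n k := by
  have L1 : ((n:ℝ)+1) * T (n+1) (n+1) (k+1)
      = ∑ j : Fin (n+1), ∑ s ∈ Sf (n+1) (n+1) (k+1),
          (((j.1+1) * s j : ℕ) : ℝ) * W (n+1) s := by
    rw [Finset.sum_comm]
    unfold T
    rw [Finset.mul_sum]
    refine Finset.sum_congr rfl (fun s hs => ?_)
    obtain ⟨h1, -⟩ := mem_Sf.mp hs
    rw [← Finset.sum_mul, ← Nat.cast_sum, h1]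
    push_cast; ring
  have h0 : ∑ s ∈ Sf (n+1) (n+1) (k+1),
      ((((0 : Fin (n+1)).1 + 1) * s 0 : ℕ) : ℝ) * W (n+1) s = T (n+1) n k := by
    rw [← step0 n k]
    refine Finset.sum_congr rfl (fun s _ => ?_)
    norm_num
  have hrest : ∑ i : Fin n, ∑ s ∈ Sf (n+1) (n+1) (k+1),
      (((i.succ.1+1) * s i.succ : ℕ) : ℝ) * W (n+1) s = (n:ℝ) * T (n+1) n (k+1) := by
    rw [Finset.sum_congr rfl (fun i _ => stepj n k i), Finset.sum_comm]
    unfold T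
    rw [Finset.mul_sum]
    refine Finset.sum_congr rfl (fun t ht => ?_)
    obtain ⟨h1, -⟩ := mem_Sf.mp ht
    have hlast : t (Fin.last n) = 0 := last_eq_zero le_rfl ht
    rw [← Finset.sum_mul, ← Nat.cast_sum]
    rw [Fin.sum_univ_castSucc (f := fun j : Fin (n+1) => (j.1+1) * t j)] at h1
    rw [hlast, Nat.mul_zero, Nat.add_zero] at h1
    rw [h1]
  rw [L1, Fin.sum_univ_succ, h0, hrest]
  ring

end ZS

namespace ZS

lemma T_zero_zero : T 0 0 0 = 1 := by
  have hset : Sf 0 0 0 = {fun _ : Fin 0 => 0} := by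
    apply Finset.ext; intro x
    simp only [mem_Sf, Finset.mem_singleton, Finset.univ_eq_empty, Finset.sum_empty]
    constructor
    · intro _; funext i; exact i.elim0
    · intro _; trivial
  rw [T, hset, Finset.sum_singleton]
  simp [W]

lemma T_zero_succ (k : ℕ) : T 0 0 (k+1) = 0 := by
  rw [T]
  have hset : Sf 0 0 (k+1) = ∅ := by
    apply Finset.eq_empty_of_forall_notMem
    intro x hx
    obtain ⟨-, h2⟩ := mem_Sf.mp hx
    simp at h2
  rw [hset, Finset.sum_empty]

lemma T_succ_zero (n : ℕ) : T (n+1) (n+1) 0 = 0 := by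
  rw [T]
  have hset : Sf (n+1) (n+1) 0 = ∅ := by
    apply Finset.eq_empty_of_forall_notMem
    intro x hx
    obtain ⟨h1, h2⟩ := mem_Sf.mp hx
    have hz : ∀ i, x i = 0 := by
      intro i
      exact (Finset.sum_eq_zero_iff.mp h2) i (Finset.mem_univ i)
    simp [hz] at h1
  rw [hset, Finset.sum_empty]

lemma main_eq : ∀ n k : ℕ, T n n k = (stirlingFirst n k : ℝ) / (Nat.factorial n : ℝ) := by
  intro n
  induction n with
  | zero =>
    intro k
    cases k with
    | zero => simp [T_zero_zero, stirlingFirst]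
    | succ k => simp [T_zero_succ, stirlingFirst]
  | succ n ih =>
    intro k
    cases k with
    | zero => simp [T_succ_zero, stirlingFirst]
    | succ k =>
      have hrec := recur n k
      rw [T_stab le_rfl, T_stab le_rfl, ih (k+1), ih k] at hrec
      have hst : stirlingFirst (n+1) (k+1) = n * stirlingFirst n (k+1) + stirlingFirst n k := rfl
      rw [hst]
      have hfac : (Nat.factorial (n+1) : ℝ) = ((n:ℝ)+1) * (Nat.factorial n : ℝ) := by
        rw [Nat.factorial_succ]; push_cast; ring
      have hn1 : ((n:ℝ)+1) ≠ 0 := by positivity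
      have hf : (Nat.factorial n : ℝ) ≠ 0 := by
        exact_mod_cast (Nat.factorial_pos n).ne'
      rw [hfac]
      push_cast
      field_simp at hrec ⊢
      linarith

end ZS


/-- `Σ_{s ∈ S_{n,k}} Π_i (1/i)^{s_i}/s_i! = |s(n,k)|/n!`. -/
theorem Z_at_one_over_i_eq_stirling_first (n k : ℕ) (h1 : 1 ≤ k) (h2 : k ≤ n) :
    (∑ s ∈ (Finset.Iic (fun _ => n : Fin n → ℕ)).filter
        (fun s => (∑ i, (i.1 + 1) * s i) = n ∧ (∑ i, s i) = k),
      ∏ i, ((1 : ℝ) / (i.1 + 1 : ℝ)) ^ s i / (Nat.factorial (s i) : ℝ))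
    = (stirlingFirst n k : ℝ) / (Nat.factorial n : ℝ) := by
  exact ZS.main_eq n k
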